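/- Let φ: (M³,g) → (N²,h) be a submersive semi-conformal map with unit vertical vector field U, θ = U♭, Ω = dθ, and let μ be the mean curvature vector of the fibres. Define the 2-form Ω̃ by Ω̃(E,F) = −g(U, [HE, HF]) for vector fields E, F, where H denotes horizontal projection. Then Ω = Ω̃ − μ♭ ∧ θ. -/

import Mathlib

open scoped BigOperators

noncomputable section

/-- Partial derivative of `f` in the `i`-th coordinate direction. -/
def pd {n : ℕ} (f : (Fin n → ℝ) → ℝ) (i : Fin n) (x : Fin n → ℝ) : ℝ :=
  fderiv ℝ f x (Pi.single i 1)

/-- Pointwise inverse of a metric (the components `g^{ij}`). -/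
def ginv {n : ℕ} (g : (Fin n → ℝ) → Matrix (Fin n) (Fin n) ℝ) (x : Fin n → ℝ) :
    Matrix (Fin n) (Fin n) ℝ := (g x)⁻¹

/-- A smooth Riemannian metric in coordinates. -/
def IsMetric {n : ℕ} (g : (Fin n → ℝ) → Matrix (Fin n) (Fin n) ℝ) : Prop :=
  (∀ i j, ContDiff ℝ (⊤ : ℕ∞) fun x => g x i j) ∧ ∀ x, (g x).IsSymm ∧ (g x).PosDef

/-- A smooth vector field (or componentwise-smooth family). -/
def SmoothVF {n : ℕ} (X : (Fin n → ℝ) → Fin n → ℝ) : Prop :=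
  ∀ k, ContDiff ℝ (⊤ : ℕ∞) fun x => X x k

/-- Christoffel symbols `Γ^k_{ij}` of the metric `g`. -/
def christoffel {n : ℕ} (g : (Fin n → ℝ) → Matrix (Fin n) (Fin n) ℝ)
    (k i j : Fin n) (x : Fin n → ℝ) : ℝ :=
  (1 / 2) * ∑ l, ginv g x k l *
    (pd (fun y => g y l j) i x + pd (fun y => g y l i) j x - pd (fun y => g y i j) l x)

/-- Covariant derivative `(∇_X Y)^k` of the Levi-Civita connection of `g`. -/
def covD {n : ℕ} (g : (Fin n → ℝ) → Matrix (Fin n) (Fin n) ℝ)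
    (X Y : (Fin n → ℝ) → Fin n → ℝ) (x : Fin n → ℝ) (k : Fin n) : ℝ :=
  (∑ i, X x i * pd (fun y => Y y k) i x) + ∑ i, ∑ j, christoffel g k i j x * X x i * Y x j

/-- The Lie bracket of vector fields, `[X,Y]^k = X^i ∂_i Y^k - Y^i ∂_i X^k`. -/
def bracket {n : ℕ} (X Y : (Fin n → ℝ) → Fin n → ℝ) (x : Fin n → ℝ) (k : Fin n) : ℝ :=
  ∑ i, (X x i * pd (fun y => Y y k) i x - Y x i * pd (fun y => X y k) i x)

/-- `φ : (M³,g) → (N²,h)` is semi-conformal with dilation `λ`, in the local-coordinate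
characterization `g^{ij} φ^α_i φ^β_j = λ² h^{αβ}`. -/
def SemiConformal (g : (Fin 3 → ℝ) → Matrix (Fin 3) (Fin 3) ℝ)
    (h : (Fin 2 → ℝ) → Matrix (Fin 2) (Fin 2) ℝ)
    (φ : (Fin 3 → ℝ) → Fin 2 → ℝ) (lam : (Fin 3 → ℝ) → ℝ) : Prop :=
  ∀ x α β, (∑ i, ∑ j, ginv g x i j * pd (fun y => φ y α) i x * pd (fun y => φ y β) j x)
    = lam x ^ 2 * ginv h (φ x) α β

/-- A vector field is vertical when it lies in `ker dφ`. -/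
def Vertical (φ : (Fin 3 → ℝ) → Fin 2 → ℝ) (U : (Fin 3 → ℝ) → Fin 3 → ℝ) : Prop :=
  ∀ x α, (∑ i, pd (fun y => φ y α) i x * U x i) = 0

/-- A vector field of unit length for `g`. -/
def UnitField (g : (Fin 3 → ℝ) → Matrix (Fin 3) (Fin 3) ℝ)
    (U : (Fin 3 → ℝ) → Fin 3 → ℝ) : Prop :=
  ∀ x, (∑ i, ∑ j, g x i j * U x i * U x j) = 1

/-- The dual 1-form `X♭ = g(X,·)`. -/
def flat (g : (Fin 3 → ℝ) → Matrix (Fin 3) (Fin 3) ℝ)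
    (X : (Fin 3 → ℝ) → Fin 3 → ℝ) (j : Fin 3) (x : Fin 3 → ℝ) : ℝ :=
  ∑ k, g x j k * X x k

/-- Horizontal projection (relative to the unit vertical field `U`):
`H X = X - g(X,U) U`. -/
def Hproj (g : (Fin 3 → ℝ) → Matrix (Fin 3) (Fin 3) ℝ)
    (U X : (Fin 3 → ℝ) → Fin 3 → ℝ) (x : Fin 3 → ℝ) (k : Fin 3) : ℝ :=
  X x k - (∑ i, ∑ j, g x i j * X x i * U x j) * U x k

/-- The mean curvature vector `μ = ∇_U U` of the fibres (`U` the unit vertical field). -/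
def meanCurv (g : (Fin 3 → ℝ) → Matrix (Fin 3) (Fin 3) ℝ)
    (U : (Fin 3 → ℝ) → Fin 3 → ℝ) (x : Fin 3 → ℝ) (k : Fin 3) : ℝ :=
  covD g U U x k

/-- Lie derivative of the metric: `(L_E g)_{ij} = E^k ∂_k g_{ij} + g_{kj} ∂_i E^k + g_{ik} ∂_j E^k`. -/
def lieD {n : ℕ} (g : (Fin n → ℝ) → Matrix (Fin n) (Fin n) ℝ)
    (E : (Fin n → ℝ) → Fin n → ℝ) (i j : Fin n) (x : Fin n → ℝ) : ℝ :=
  (∑ k, E x k * pd (fun y => g y i j) k x)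
    + (∑ k, g x k j * pd (fun y => E y k) i x)
    + ∑ k, g x i k * pd (fun y => E y k) j x

lemma pd_congr_fun {n : ℕ} {f g : (Fin n → ℝ) → ℝ} (h : ∀ y, f y = g y) (i : Fin n) (x : Fin n → ℝ) :
    pd f i x = pd g i x := by
  have : f = g := funext h
  rw [pd, pd, this]

lemma pd_const {n : ℕ} (c : ℝ) (i : Fin n) (x : Fin n → ℝ) : pd (fun _ => c) i x = 0 := by
  simp [pd]

lemma pd_mul {n : ℕ} {f g : (Fin n → ℝ) → ℝ} {x : Fin n → ℝ}
    (hf : DifferentiableAt ℝ f x) (hg : DifferentiableAt ℝ g x) (i : Fin n) :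
    pd (fun y => f y * g y) i x = pd f i x * g x + f x * pd g i x := by
  unfold pd
  rw [fderiv_fun_mul hf hg]
  simp
  ring

lemma pd_mul3 {n : ℕ} {f g h : (Fin n → ℝ) → ℝ} {x : Fin n → ℝ}
    (hf : DifferentiableAt ℝ f x) (hg : DifferentiableAt ℝ g x) (hh : DifferentiableAt ℝ h x) (i : Fin n) :
    pd (fun y => f y * g y * h y) i x =
      pd f i x * g x * h x + f x * pd g i x * h x + f x * g x * pd h i x := by
  rw [pd_mul (hf.fun_mul hg) hh i, pd_mul hf hg i]
  ring

lemma pd_sum {n : ℕ} {ι : Type*} {s : Finset ι} {f : ι → (Fin n → ℝ) → ℝ} {x : Fin n → ℝ}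
    (hf : ∀ k ∈ s, DifferentiableAt ℝ (f k) x) (i : Fin n) :
    pd (fun y => ∑ k ∈ s, f k y) i x = ∑ k ∈ s, pd (f k) i x := by
  unfold pd
  rw [fderiv_fun_sum hf]
  simp
lemma mu_flat (g : (Fin 3 → ℝ) → Matrix (Fin 3) (Fin 3) ℝ) (U : (Fin 3 → ℝ) → Fin 3 → ℝ)
    (hg : IsMetric g) (hU : SmoothVF U) (hUunit : UnitField g U) (x : Fin 3 → ℝ) (k : Fin 3) :
    flat g (meanCurv g U) k x =
      ∑ i, U x i * (pd (fun y => flat g U k y) i x - pd (fun y => flat g U i y) k x) := by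
  have hgD : ∀ i j, Differentiable ℝ fun y => g y i j := fun i j => (hg.1 i j).differentiable (by simp)
  have hUD : ∀ j, Differentiable ℝ fun y => U y j := fun j => (hU j).differentiable (by simp)
  have hdet : IsUnit (g x).det := isUnit_iff_ne_zero.mpr (ne_of_gt (hg.2 x).2.det_pos)
  have hinv : ∀ kk m : Fin 3, (∑ l, g x kk l * ginv g x l m) = if kk = m then 1 else 0 := by
    intro kk m
    have h1 : g x * (g x)⁻¹ = 1 := Matrix.mul_nonsing_inv _ hdet
    have h2 : (g x * (g x)⁻¹) kk m = (1 : Matrix (Fin 3) (Fin 3) ℝ) kk m := by rw [h1]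
    rw [Matrix.mul_apply, Matrix.one_apply] at h2
    exact h2
  have hcontr : ∀ (B : Fin 3 → ℝ) (kk : Fin 3),
      (∑ l, g x kk l * ((1:ℝ)/2 * ∑ m, ginv g x l m * B m)) = 1/2 * B kk := by
    intro B kk
    calc (∑ l, g x kk l * ((1:ℝ)/2 * ∑ m, ginv g x l m * B m))
        = ∑ l, ∑ m, g x kk l * ginv g x l m * (1/2 * B m) := by
          refine Finset.sum_congr rfl fun l _ => ?_
          rw [Finset.mul_sum, Finset.mul_sum]
          refine Finset.sum_congr rfl fun m _ => ?_
          ring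
      _ = ∑ m, ∑ l, g x kk l * ginv g x l m * (1/2 * B m) := Finset.sum_comm
      _ = ∑ m, (∑ l, g x kk l * ginv g x l m) * (1/2 * B m) := by
          refine Finset.sum_congr rfl fun m _ => ?_
          rw [Finset.sum_mul]
      _ = ∑ m, (if kk = m then 1 else 0) * (1/2 * B m) := by
          refine Finset.sum_congr rfl fun m _ => by rw [hinv kk m]
      _ = 1/2 * B kk := by simp
  have hchr : ∀ i j : Fin 3, (∑ l, g x k l * christoffel g l i j x)
      = 1/2 * (pd (fun y => g y k j) i x + pd (fun y => g y k i) j x - pd (fun y => g y i j) k x) := by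
    intro i j
    have := hcontr (fun m => pd (fun y => g y m j) i x + pd (fun y => g y m i) j x
      - pd (fun y => g y i j) m x) k
    simpa [christoffel] using this
  have hpdθ : ∀ (kk i : Fin 3), pd (fun y => flat g U kk y) i x
      = ∑ m, (pd (fun y => g y kk m) i x * U x m + g x kk m * pd (fun y => U y m) i x) := by
    intro kk i
    have e : (fun y => flat g U kk y) = fun y => ∑ m, g y kk m * U y m := rfl
    rw [e, pd_sum (fun m _ => ((hgD kk m).fun_mul (hUD m)).differentiableAt) i]
    exact Finset.sum_congr rfl fun m _ => pd_mul ((hgD kk m).differentiableAt) ((hUD m).differentiableAt) i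
  have hN0 : pd (fun y => ∑ i, ∑ j, g y i j * U y i * U y j) k x = 0 := by
    rw [pd_congr_fun hUunit, pd_const]
  have hNexp : (∑ i, ∑ j, (pd (fun y => g y i j) k x * U x i * U x j
      + g x i j * pd (fun y => U y i) k x * U x j
      + g x i j * U x i * pd (fun y => U y j) k x)) = 0 := by
    rw [← hN0,
      pd_sum (fun i _ => Differentiable.differentiableAt <| Differentiable.fun_sum
        (fun j _ => ((hgD i j).fun_mul (hUD i)).fun_mul (hUD j))) k]
    refine Finset.sum_congr rfl fun i _ => ?_
    rw [pd_sum (fun j _ => (((hgD i j).fun_mul (hUD i)).fun_mul (hUD j)).differentiableAt) k]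
    exact Finset.sum_congr rfl fun j _ =>
      (pd_mul3 (x := x) ((hgD i j).differentiableAt) ((hUD i).differentiableAt) ((hUD j).differentiableAt) k).symm
  have s10 : g x 1 0 = g x 0 1 := (hg.2 x).1.apply 0 1
  have s20 : g x 2 0 = g x 0 2 := (hg.2 x).1.apply 0 2
  have s21 : g x 2 1 = g x 1 2 := (hg.2 x).1.apply 1 2
  simp only [hpdθ]
  simp only [flat, meanCurv, covD]
  simp only [Fin.sum_univ_three] at hNexp ⊢
  have hc00 := hchr 0 0; have hc01 := hchr 0 1; have hc02 := hchr 0 2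
  have hc10 := hchr 1 0; have hc11 := hchr 1 1; have hc12 := hchr 1 2
  have hc20 := hchr 2 0; have hc21 := hchr 2 1; have hc22 := hchr 2 2
  simp only [Fin.sum_univ_three] at hc00 hc01 hc02 hc10 hc11 hc12 hc20 hc21 hc22
  simp only [s10, s20, s21] at hNexp ⊢
  linear_combination (U x 0 * U x 0) * hc00 + (U x 0 * U x 1) * hc01 + (U x 0 * U x 2) * hc02
    + (U x 1 * U x 0) * hc10 + (U x 1 * U x 1) * hc11 + (U x 1 * U x 2) * hc12
    + (U x 2 * U x 0) * hc20 + (U x 2 * U x 1) * hc21 + (U x 2 * U x 2) * hc22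
    + (1/2) * hNexp

/-- For a submersive semi-conformal `φ : (M³,g) → (N²,h)` with unit vertical
field `U`, `θ = U♭`, `Ω = dθ`, and `Ω̃(E,F) = −g(U,[HE,HF])`, one has `Ω = Ω̃ − μ♭ ∧ θ`. -/
theorem dtheta_eq_integrability_form_minus_wedge
    (g : (Fin 3 → ℝ) → Matrix (Fin 3) (Fin 3) ℝ)
    (h : (Fin 2 → ℝ) → Matrix (Fin 2) (Fin 2) ℝ)
    (φ : (Fin 3 → ℝ) → Fin 2 → ℝ) (lam : (Fin 3 → ℝ) → ℝ)
    (U : (Fin 3 → ℝ) → Fin 3 → ℝ)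
    (hg : IsMetric g) (hh : IsMetric h)
    (hφ : ∀ α, ContDiff ℝ (⊤ : ℕ∞) fun x => φ x α)
    (hlam : ContDiff ℝ (⊤ : ℕ∞) lam) (hlampos : ∀ x, 0 < lam x)
    (hsc : SemiConformal g h φ lam)
    (hU : SmoothVF U) (hUvert : Vertical φ U) (hUunit : UnitField g U) :
    ∀ E F : (Fin 3 → ℝ) → Fin 3 → ℝ, SmoothVF E → SmoothVF F →
      ∀ x,
        (∑ i, ∑ j, E x i * F x j *
            (pd (fun y => flat g U j y) i x - pd (fun y => flat g U i y) j x)) =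
        -(∑ i, ∑ j, g x i j * U x i * bracket (Hproj g U E) (Hproj g U F) x j)
          - ((∑ i, flat g (meanCurv g U) i x * E x i) * (∑ j, flat g U j x * F x j)
              - (∑ i, flat g (meanCurv g U) i x * F x i) * (∑ j, flat g U j x * E x j)) := by

  intro E F hE hF x
  have hgD : ∀ i j, Differentiable ℝ fun y => g y i j :=
    fun i j => (hg.1 i j).differentiable (by simp)
  have hUD : ∀ j, Differentiable ℝ fun y => U y j :=
    fun j => (hU j).differentiable (by simp)
  have hED : ∀ j, Differentiable ℝ fun y => E y j :=
    fun j => (hE j).differentiable (by simp)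
  have hFD : ∀ j, Differentiable ℝ fun y => F y j :=
    fun j => (hF j).differentiable (by simp)
  have hθD : ∀ j, Differentiable ℝ fun y => flat g U j y := fun j => by
    have e : (fun y => flat g U j y) = fun y => ∑ m, g y j m * U y m := rfl
    rw [e]
    exact Differentiable.fun_sum (fun m _ => (hgD j m).fun_mul (hUD m))
  have hXD : ∀ (Z : (Fin 3 → ℝ) → Fin 3 → ℝ), (∀ j, Differentiable ℝ fun y => Z y j) →
      ∀ k, Differentiable ℝ fun y => Hproj g U Z y k := by
    intro Z hZD k
    have e : (fun y => Hproj g U Z y k)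
        = fun y => Z y k - (∑ i, ∑ j, g y i j * Z y i * U y j) * U y k := rfl
    rw [e]
    exact (hZD k).sub ((Differentiable.fun_sum fun i _ => Differentiable.fun_sum fun j _ =>
      ((hgD i j).fun_mul (hZD i)).fun_mul (hUD j)).fun_mul (hUD k))
  have hθU : ∀ y, (∑ j, flat g U j y * U y j) = 1 := by
    intro y
    rw [← hUunit y]
    simp only [flat, Finset.sum_mul]
    exact Finset.sum_congr rfl fun j _ => Finset.sum_congr rfl fun m _ => by ring
  have hθE : ∀ (Z : (Fin 3 → ℝ) → Fin 3 → ℝ) (y),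
      (∑ j, flat g U j y * Z y j) = ∑ i, ∑ j, g y i j * Z y i * U y j := by
    intro Z y
    simp only [flat, Finset.sum_mul]
    exact Finset.sum_congr rfl fun j _ => Finset.sum_congr rfl fun m _ => by ring
  have hθH : ∀ (Z : (Fin 3 → ℝ) → Fin 3 → ℝ) (y),
      (∑ j, flat g U j y * Hproj g U Z y j) = 0 := by
    intro Z y
    have e : ∀ j, flat g U j y * Hproj g U Z y j
        = flat g U j y * Z y j
          - (∑ a, ∑ b, g y a b * Z y a * U y b) * (flat g U j y * U y j) := by
      intro j
      simp only [Hproj]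
      ring
    rw [Finset.sum_congr rfl fun j _ => e j, Finset.sum_sub_distrib, ← Finset.mul_sum,
      hθU y, hθE Z y, mul_one, sub_self]
  have hdθH : ∀ (Z : (Fin 3 → ℝ) → Fin 3 → ℝ), (∀ j, Differentiable ℝ fun y => Z y j) →
      ∀ i, (∑ j, (pd (fun y => flat g U j y) i x * Hproj g U Z x j
            + flat g U j x * pd (fun y => Hproj g U Z y j) i x)) = 0 := by
    intro Z hZD i
    have h0 : pd (fun y => ∑ j, flat g U j y * Hproj g U Z y j) i x = 0 := by
      rw [pd_congr_fun (hθH Z), pd_const]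
    rw [← h0, pd_sum (fun j _ => ((hθD j).fun_mul (hXD Z hZD j)).differentiableAt) i]
    exact Finset.sum_congr rfl fun j _ =>
      (pd_mul (x := x) ((hθD j).differentiableAt) ((hXD Z hZD j).differentiableAt) i).symm
  have hbr : (∑ j, flat g U j x * bracket (Hproj g U E) (Hproj g U F) x j)
      = -∑ i, ∑ j, Hproj g U E x i * Hproj g U F x j *
          (pd (fun y => flat g U j y) i x - pd (fun y => flat g U i y) j x) := by
    have hoE0 := hdθH E hED 0; have hoE1 := hdθH E hED 1; have hoE2 := hdθH E hED 2
    have hoF0 := hdθH F hFD 0; have hoF1 := hdθH F hFD 1; have hoF2 := hdθH F hFD 2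
    simp only [Fin.sum_univ_three] at hoE0 hoE1 hoE2 hoF0 hoF1 hoF2
    simp only [bracket, Fin.sum_univ_three]
    linear_combination (Hproj g U E x 0) * hoF0 + (Hproj g U E x 1) * hoF1
      + (Hproj g U E x 2) * hoF2 - (Hproj g U F x 0) * hoE0 - (Hproj g U F x 1) * hoE1
      - (Hproj g U F x 2) * hoE2
  have s10 : g x 1 0 = g x 0 1 := (hg.2 x).1.apply 0 1
  have s20 : g x 2 0 = g x 0 2 := (hg.2 x).1.apply 0 2
  have s21 : g x 2 1 = g x 1 2 := (hg.2 x).1.apply 1 2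
  simp only [mu_flat g U hg hU hUunit x]
  simp only [flat, Hproj, Fin.sum_univ_three, s10, s20, s21] at hbr ⊢
  linear_combination hbr
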